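/- As $\rho \to \infty$ with $b \to 1$, the ratio $h(\rho, b) = \frac{\int_{-\pi}^{\pi} \cos^2(z) e^{\cos(2z) + \rho b \sin(z)} dz}{\int_{-\pi}^{\pi} e^{\cos(2z) + \rho b \sin(z)} dz}$ satisfies $\rho \, h(\rho, b) \to 1$; more precisely $h(\rho, b) \sim \frac{1}{\rho b - 4}$ as $\rho b \to \infty$ with $b$ bounded away from $0$. -/

import Mathlib

open Real MeasureTheory Filter Topology

/-- The ratio `h(ρ,b) = (∫ cos² z e^{cos 2z + ρ b sin z} dz) / (∫ e^{cos 2z + ρ b sin z} dz)`. -/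
noncomputable def hRatio (ρ b : ℝ) : ℝ :=
  (∫ z in (-π)..π, cos z ^ 2 * exp (cos (2 * z) + ρ * b * sin z)) /
    ∫ z in (-π)..π, exp (cos (2 * z) + ρ * b * sin z)

noncomputable def lapA (s : ℝ) : ℝ := ∫ z in (-π)..π, exp (cos (2 * z) + s * sin z)
noncomputable def lapN (s : ℝ) : ℝ := ∫ z in (-π)..π, cos z ^ 2 * exp (cos (2 * z) + s * sin z)
noncomputable def lapB (s : ℝ) : ℝ := ∫ z in (-π)..π, sin z * exp (cos (2 * z) + s * sin z)
noncomputable def lapE1 (s : ℝ) : ℝ := ∫ z in (-π)..π, (1 - sin z) * exp (cos (2 * z) + s * sin z)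
noncomputable def lapE2 (s : ℝ) : ℝ :=
  ∫ z in (-π)..π, (1 - sin z) * cos z ^ 2 * exp (cos (2 * z) + s * sin z)

lemma hRatio_eq (ρ b : ℝ) : hRatio ρ b = lapN (ρ * b) / lapA (ρ * b) := rfl

lemma intA (s : ℝ) : IntervalIntegrable (fun z : ℝ => exp (cos (2 * z) + s * sin z))
    volume (-π) π := by apply Continuous.intervalIntegrable; fun_prop

lemma lapA_pos (s : ℝ) : 0 < lapA s := by
  apply intervalIntegral.intervalIntegral_pos_of_pos (f := fun z => exp (cos (2*z) + s * sin z))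
    (intA s) (fun x => exp_pos _)
  linarith [pi_pos]

lemma hderiv (s z : ℝ) :
    HasDerivAt (fun z : ℝ => cos z * exp (cos (2 * z) + s * sin z))
      ((s * cos z ^ 2 - sin z - 4 * (sin z * cos z ^ 2)) * exp (cos (2 * z) + s * sin z)) z := by
  have h1 : HasDerivAt (fun z : ℝ => cos (2 * z) + s * sin z)
      (-sin (2 * z) * 2 + s * cos z) z := by
    have := ((hasDerivAt_id z).const_mul 2).cos
    simp only [id_eq, mul_one] at this
    exact this.add ((hasDerivAt_sin z).const_mul s)
  have h3 := (hasDerivAt_cos z).mul h1.exp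
  refine h3.congr_deriv ?_
  rw [sin_two_mul]
  ring

lemma key (s : ℝ) : (s - 4) * lapN s = lapB s - 4 * lapE2 s := by
  have i1 : IntervalIntegrable (fun z : ℝ => cos z ^ 2 * exp (cos (2 * z) + s * sin z))
      volume (-π) π := by apply Continuous.intervalIntegrable; fun_prop
  have i2 : IntervalIntegrable (fun z : ℝ => sin z * exp (cos (2 * z) + s * sin z))
      volume (-π) π := by apply Continuous.intervalIntegrable; fun_prop
  have i3 : IntervalIntegrable (fun z : ℝ => (1 - sin z) * cos z ^ 2 * exp (cos (2 * z) + s * sin z))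
      volume (-π) π := by apply Continuous.intervalIntegrable; fun_prop
  have h0 : (∫ z in (-π)..π,
      (s * cos z ^ 2 - sin z - 4 * (sin z * cos z ^ 2)) * exp (cos (2 * z) + s * sin z)) = 0 := by
    rw [intervalIntegral.integral_eq_sub_of_hasDerivAt (fun z _ => hderiv s z)
      (by apply Continuous.intervalIntegrable; fun_prop)]
    simp [sin_pi, cos_pi, mul_neg, cos_neg, sin_neg, cos_two_pi]
  have hsplit : (∫ z in (-π)..π,
      (s * cos z ^ 2 - sin z - 4 * (sin z * cos z ^ 2)) * exp (cos (2 * z) + s * sin z))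
      = s * lapN s - lapB s - 4 * (lapN s - lapE2 s) := by
    have J : (∫ z in (-π)..π, sin z * cos z ^ 2 * exp (cos (2 * z) + s * sin z))
        = lapN s - lapE2 s := by
      rw [lapN, lapE2, ← intervalIntegral.integral_sub i1 i3]
      congr 1; ext z; ring
    rw [← J, lapN, lapB]
    rw [show (fun z : ℝ => (s * cos z ^ 2 - sin z - 4 * (sin z * cos z ^ 2)) *
        exp (cos (2 * z) + s * sin z))
      = fun z : ℝ => (s * (cos z ^ 2 * exp (cos (2 * z) + s * sin z))
          - sin z * exp (cos (2 * z) + s * sin z))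
          - 4 * (sin z * cos z ^ 2 * exp (cos (2 * z) + s * sin z)) by ext z; ring]
    rw [intervalIntegral.integral_sub ((i1.const_mul s).sub i2)
        (by apply Continuous.intervalIntegrable; fun_prop),
      intervalIntegral.integral_sub (i1.const_mul s) i2,
      intervalIntegral.integral_const_mul, intervalIntegral.integral_const_mul]
  rw [hsplit] at h0
  linarith

lemma E1_eq (s : ℝ) : lapE1 s = lapA s - lapB s := by
  have i2 : IntervalIntegrable (fun z : ℝ => sin z * exp (cos (2 * z) + s * sin z))
      volume (-π) π := by apply Continuous.intervalIntegrable; fun_prop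
  rw [lapE1, lapA, lapB, ← intervalIntegral.integral_sub (intA s) i2]
  congr 1; ext z; ring

lemma lapE1_nonneg (s : ℝ) : 0 ≤ lapE1 s := by
  apply intervalIntegral.integral_nonneg (by linarith [pi_pos])
  intro z _
  have := sin_le_one z
  exact mul_nonneg (by linarith) (exp_pos _).le

lemma lapE2_nonneg (s : ℝ) : 0 ≤ lapE2 s := by
  apply intervalIntegral.integral_nonneg (by linarith [pi_pos])
  intro z _
  have := sin_le_one z
  exact mul_nonneg (mul_nonneg (by linarith) (sq_nonneg _)) (exp_pos _).le

lemma lapE2_le (s : ℝ) : lapE2 s ≤ lapE1 s := by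
  apply intervalIntegral.integral_mono_on (by linarith [pi_pos])
    (by apply Continuous.intervalIntegrable; fun_prop)
    (by apply Continuous.intervalIntegrable; fun_prop)
  intro z _
  have h1 := sin_le_one z
  have h2 : cos z ^ 2 ≤ 1 := cos_sq_le_one z
  have h3 := (exp_pos (cos (2 * z) + s * sin z)).le
  have h4 : (1 - sin z) * cos z ^ 2 ≤ 1 - sin z := by nlinarith
  exact mul_le_mul_of_nonneg_right h4 h3

lemma E1_upper {s δ : ℝ} (hs : 0 ≤ s) (hδ0 : 0 < δ) :
    lapE1 s ≤ δ * lapA s + 2 * π * (2 * exp (1 + s * (1 - δ))) := by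
  have pin : (-π) ≤ π := by linarith [pi_pos]
  have h1 : lapE1 s ≤ ∫ z in (-π)..π,
      (δ * exp (cos (2 * z) + s * sin z) + 2 * exp (1 + s * (1 - δ))) := by
    apply intervalIntegral.integral_mono_on pin
      (by apply Continuous.intervalIntegrable; fun_prop)
      (by apply Continuous.intervalIntegrable; fun_prop)
    intro z _
    by_cases h : 1 - δ ≤ sin z
    · have : (1 - sin z) ≤ δ := by linarith
      nlinarith [exp_pos (cos (2*z) + s * sin z), exp_pos (1 + s * (1 - δ)),
        (exp_pos (cos (2*z) + s * sin z)).le]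
    · push_neg at h
      have hb : cos (2 * z) + s * sin z ≤ 1 + s * (1 - δ) := by
        have := cos_le_one (2 * z)
        nlinarith
      have he : exp (cos (2 * z) + s * sin z) ≤ exp (1 + s * (1 - δ)) := exp_le_exp.2 hb
      have h2 : 1 - sin z ≤ 2 := by nlinarith [neg_one_le_sin z]
      nlinarith [exp_pos (cos (2*z) + s * sin z), (exp_pos (cos (2*z) + s * sin z)).le,
        sin_le_one z, exp_pos (1 + s * (1 - δ))]
  calc lapE1 s ≤ _ := h1
    _ = δ * lapA s + 2 * π * (2 * exp (1 + s * (1 - δ))) := by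
        rw [intervalIntegral.integral_add ((intA s).const_mul δ)
          (intervalIntegrable_const), intervalIntegral.integral_const_mul,
          intervalIntegral.integral_const, lapA]
        simp [smul_eq_mul]; ring

lemma A_lower {s δ : ℝ} (hs : 0 ≤ s) (hδ0 : 0 < δ) (hδ1 : δ ≤ 1 / 2) :
    2 * δ * exp (-1 + s * (1 - δ / 2)) ≤ lapA s := by
  have hpi : (3.14 : ℝ) ≤ π := by linarith [pi_gt_d6]
  have hsub : (∫ z in (π/2 - δ)..(π/2 + δ), exp (cos (2 * z) + s * sin z)) ≤ lapA s := by
    apply intervalIntegral.integral_mono_interval (by linarith) (by linarith) (by linarith)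
    · filter_upwards with z using (exp_pos _).le
    · exact intA s
  refine le_trans ?_ hsub
  have hconst : (∫ z in (π/2 - δ)..(π/2 + δ), exp (-1 + s * (1 - δ / 2)))
      ≤ ∫ z in (π/2 - δ)..(π/2 + δ), exp (cos (2 * z) + s * sin z) := by
    apply intervalIntegral.integral_mono_on (by linarith)
      intervalIntegrable_const (by apply Continuous.intervalIntegrable; fun_prop)
    intro z hz
    apply exp_le_exp.2
    have hsin : 1 - δ / 2 ≤ sin z := by
      have habs : |z - π / 2| ≤ δ := by
        rw [abs_le]; constructor <;> [skip; skip] <;> simp at hz <;>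
          cases hz with | intro h1 h2 => linarith
      have hc : cos δ ≤ cos |z - π / 2| :=
        cos_le_cos_of_nonneg_of_le_pi (abs_nonneg _) (by linarith) habs
      have : cos |z - π / 2| = sin z := by
        rw [cos_abs, cos_sub_pi_div_two]
      have hq : 1 - δ ^ 2 / 2 ≤ cos δ := one_sub_sq_div_two_le_cos
      nlinarith
    have := neg_one_le_cos (2 * z)
    nlinarith
  refine le_trans ?_ hconst
  rw [intervalIntegral.integral_const, smul_eq_mul]
  have : π / 2 + δ - (π / 2 - δ) = 2 * δ := by ring
  rw [this]

lemma conc : ∀ ε : ℝ, 0 < ε → ∃ M : ℝ, ∀ s : ℝ, M ≤ s → lapE1 s / lapA s ≤ ε := by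
  intro ε hε
  set δ : ℝ := min (ε / 2) (1 / 2) with hδdef
  have hδ0 : 0 < δ := lt_min (by linarith) (by norm_num)
  have hδ1 : δ ≤ 1 / 2 := min_le_right _ _
  have hδε : δ ≤ ε / 2 := min_le_left _ _
  have tend : Tendsto (fun s : ℝ => 2 * π / δ * exp (2 - s * (δ / 2))) atTop (nhds 0) := by
    have h1 : Tendsto (fun s : ℝ => 2 - s * (δ / 2)) atTop atBot := by
      apply tendsto_atBot_add_const_left
      exact tendsto_neg_atBot_iff.mpr (tendsto_id.atTop_mul_const (by positivity))
    have h2 := tendsto_exp_atBot.comp h1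
    have := h2.const_mul (2 * π / δ)
    simpa using this
  have hev : ∀ᶠ s : ℝ in atTop, 2 * π / δ * exp (2 - s * (δ / 2)) < ε / 2 :=
    tend.eventually (gt_mem_nhds (by linarith))
  obtain ⟨M0, hM0⟩ := eventually_atTop.mp hev
  refine ⟨max M0 0, fun s hsM => ?_⟩
  have hs0 : 0 ≤ s := le_trans (le_max_right _ _) hsM
  have hsM0 : M0 ≤ s := le_trans (le_max_left _ _) hsM
  have hA := lapA_pos s
  have hup := E1_upper hs0 hδ0
  have hlow := A_lower hs0 hδ0 hδ1
  have hlow0 : 0 < 2 * δ * exp (-1 + s * (1 - δ / 2)) := by positivity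
  calc lapE1 s / lapA s
      ≤ (δ * lapA s + 2 * π * (2 * exp (1 + s * (1 - δ)))) / lapA s := by gcongr
    _ = δ + 2 * π * (2 * exp (1 + s * (1 - δ))) / lapA s := by
        rw [add_div, mul_div_assoc, div_self hA.ne', mul_one]
    _ ≤ δ + 2 * π * (2 * exp (1 + s * (1 - δ))) / (2 * δ * exp (-1 + s * (1 - δ / 2))) := by
        gcongr
    _ = δ + 2 * π / δ * exp (2 - s * (δ / 2)) := by
        congr 1
        rw [show (2 - s * (δ / 2)) = (1 + s * (1 - δ)) - (-1 + s * (1 - δ / 2)) by ring, exp_sub]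
        field_simp
    _ ≤ ε / 2 + ε / 2 := by linarith [hM0 s hsM0]
    _ = ε := by ring

lemma ratio_bound (s : ℝ) :
    |(s - 4) * (lapN s / lapA s) - 1| ≤ 5 * (lapE1 s / lapA s) := by
  have hA := lapA_pos s
  have hk := key s
  have hE1 := E1_eq s
  have heq : (s - 4) * (lapN s / lapA s) - 1 = -(lapE1 s + 4 * lapE2 s) / lapA s := by
    field_simp
    linarith
  rw [heq, abs_div, abs_of_pos hA, abs_neg,
    abs_of_nonneg (by linarith [lapE1_nonneg s, lapE2_nonneg s])]
  rw [show 5 * (lapE1 s / lapA s) = 5 * lapE1 s / lapA s by ring]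
  gcongr
  linarith [lapE2_le s]

lemma concrete : ∀ ε : ℝ, 0 < ε → ∃ M : ℝ, ∀ s : ℝ, M ≤ s →
    |(s - 4) * (lapN s / lapA s) - 1| ≤ ε := by
  intro ε hε
  obtain ⟨M, hM⟩ := conc (ε / 5) (by linarith)
  exact ⟨M, fun s hs => le_trans (ratio_bound s) (by linarith [hM s hs])⟩

lemma main_tendsto : Tendsto (fun s : ℝ => (s - 4) * (lapN s / lapA s)) atTop (nhds 1) := by
  have h0 : Tendsto (fun s : ℝ => (s - 4) * (lapN s / lapA s) - 1) atTop (nhds 0) := by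
    rw [Metric.tendsto_atTop]
    intro ε hε
    obtain ⟨M, hM⟩ := concrete (ε / 2) (by linarith)
    refine ⟨M, fun s hs => ?_⟩
    have := hM s hs
    rw [Real.dist_eq, sub_zero]
    linarith
  have := h0.add_const 1
  simpa using this

/-- As `ρ → ∞` with `b → 1`, `ρ h(ρ,b) → 1`; more precisely `h(ρ,b) ∼ 1/(ρ b - 4)` as
`ρ b → ∞` with `b` bounded away from `0`. -/
theorem stmt14 :
    (∀ ρs bs : ℕ → ℝ, Tendsto ρs atTop atTop → Tendsto bs atTop (nhds 1) →
      Tendsto (fun n => ρs n * hRatio (ρs n) (bs n)) atTop (nhds 1)) ∧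
    (∀ b0 : ℝ, 0 < b0 → ∀ ε : ℝ, 0 < ε → ∃ M : ℝ, ∀ ρ b : ℝ, b0 ≤ b → M ≤ ρ * b →
      |hRatio ρ b / (1 / (ρ * b - 4)) - 1| ≤ ε) := by
  constructor
  · intro ρs bs hρ hb
    have hs : Tendsto (fun n => ρs n * bs n) atTop atTop :=
      hρ.atTop_mul_pos one_pos hb
    have hT : Tendsto (fun n => (ρs n * bs n - 4) * (lapN (ρs n * bs n) / lapA (ρs n * bs n)))
        atTop (nhds 1) := main_tendsto.comp hs
    have hinv : Tendsto (fun n => ρs n / (ρs n * bs n - 4)) atTop (nhds 1) := by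
      have h4 : Tendsto (fun n => (4 : ℝ) / ρs n) atTop (nhds 0) :=
        tendsto_const_nhds.div_atTop hρ
      have hd : Tendsto (fun n => bs n - 4 / ρs n) atTop (nhds 1) := by
        have := hb.sub h4; simpa using this
      have hd' : Tendsto (fun n => (bs n - 4 / ρs n)⁻¹) atTop (nhds 1) := by
        have := hd.inv₀ one_ne_zero; simpa using this
      apply hd'.congr'
      filter_upwards [hρ.eventually_gt_atTop 0] with n hn
      rw [show bs n - 4 / ρs n = (ρs n * bs n - 4) / ρs n by field_simp, inv_div]
    have hprod := hinv.mul hT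
    rw [one_mul] at hprod
    apply hprod.congr'
    filter_upwards [hs.eventually_gt_atTop 4] with n hn
    have h4 : ρs n * bs n - 4 ≠ 0 := by linarith
    rw [hRatio_eq]
    generalize lapN (ρs n * bs n) / lapA (ρs n * bs n) = X
    field_simp
  · intro b0 hb0 ε hε
    obtain ⟨M, hM⟩ := concrete ε hε
    refine ⟨max M 5, fun ρ b hb hMs => ?_⟩
    have hs5 : (5 : ℝ) ≤ ρ * b := le_trans (le_max_right _ _) hMs
    have hsM : M ≤ ρ * b := le_trans (le_max_left _ _) hMs
    have h4 : ρ * b - 4 ≠ 0 := by linarith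
    rw [hRatio_eq, one_div, div_eq_mul_inv, inv_inv, mul_comm]
    exact hM _ hsM
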